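/- arXiv:1112.5131 — 8 statements merged into one kernel-verified Lean document; each statement's English description precedes it below -/
import Mathlib

section
/- Let R = ℤ[x_1,...,x_N] and let c4, c6 ∈ R be primitive polynomials (content 1) satisfying c4^3 - c6^2 = 1728·Δ for some Δ ∈ R. If there exists a1 ∈ R with a1^2·c4 + c6 ≡ 0 (mod 4), then there exist b2 ∈ R with c4 ≡ b2^2 (mod 24), b2·c4 + c6 ≡ 0 (mod 12), and b2^3 - 3·b2·c4 - 2·c6 ≡ 0 (mod 432). -/
open MvPolynomial

private lemma intCast_dvd_iff {N : ℕ} (n : ℤ) (f : MvPolynomial (Fin N) ℤ) :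
    ((n : ℤ) : MvPolynomial (Fin N) ℤ) ∣ f ↔ ∀ m, n ∣ coeff m f := by
  rw [← map_intCast (C : ℤ →+* MvPolynomial (Fin N) ℤ) n]
  exact C_dvd_iff_dvd_coeff n f

private lemma dvd_iff_map_zero {N : ℕ} (n : ℕ) (f : MvPolynomial (Fin N) ℤ) :
    (((n : ℕ) : ℤ) : MvPolynomial (Fin N) ℤ) ∣ f ↔
      MvPolynomial.map (Int.castRingHom (ZMod n)) f = 0 := by
  rw [intCast_dvd_iff]
  constructor
  · intro h
    ext m
    rw [coeff_map]
    simpa [ZMod.intCast_zmod_eq_zero_iff_dvd] using h m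
  · intro h m
    have := congrArg (coeff m) h
    rw [coeff_map] at this
    simpa [ZMod.intCast_zmod_eq_zero_iff_dvd] using this

private lemma dvd2_iff {N : ℕ} (f : MvPolynomial (Fin N) ℤ) :
    (2 : MvPolynomial (Fin N) ℤ) ∣ f ↔
      MvPolynomial.map (Int.castRingHom (ZMod 2)) f = 0 := by
  have := dvd_iff_map_zero (N := N) 2 f
  push_cast at this
  exact this

private lemma dvd3_iff {N : ℕ} (f : MvPolynomial (Fin N) ℤ) :
    (3 : MvPolynomial (Fin N) ℤ) ∣ f ↔
      MvPolynomial.map (Int.castRingHom (ZMod 3)) f = 0 := by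
  have := dvd_iff_map_zero (N := N) 3 f
  push_cast at this
  exact this

private lemma dvd_cancel2 {N : ℕ} (g f : MvPolynomial (Fin N) ℤ)
    (hg : MvPolynomial.map (Int.castRingHom (ZMod 2)) g ≠ 0)
    (h : (2 : MvPolynomial (Fin N) ℤ) ∣ g * f) : (2 : MvPolynomial (Fin N) ℤ) ∣ f := by
  rw [dvd2_iff] at h ⊢
  rw [map_mul] at h
  exact (mul_eq_zero.mp h).resolve_left hg

private lemma dvd_cancel3 {N : ℕ} (g f : MvPolynomial (Fin N) ℤ)
    (hg : MvPolynomial.map (Int.castRingHom (ZMod 3)) g ≠ 0)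
    (h : (3 : MvPolynomial (Fin N) ℤ) ∣ g * f) : (3 : MvPolynomial (Fin N) ℤ) ∣ f := by
  rw [dvd3_iff] at h ⊢
  rw [map_mul] at h
  exact (mul_eq_zero.mp h).resolve_left hg

private lemma three_ne' {N : ℕ} : (3 : MvPolynomial (Fin N) ℤ) ≠ 0 := by norm_num

private lemma two_ne' {N : ℕ} : (2 : MvPolynomial (Fin N) ℤ) ≠ 0 := by norm_num

private lemma cancel27 {N : ℕ} (g f : MvPolynomial (Fin N) ℤ)
    (hg : MvPolynomial.map (Int.castRingHom (ZMod 3)) g ≠ 0)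
    (h : (27 : MvPolynomial (Fin N) ℤ) ∣ g * f) : (27 : MvPolynomial (Fin N) ℤ) ∣ f := by
  obtain ⟨q, hq⟩ := h
  obtain ⟨f1, hf1⟩ := dvd_cancel3 g f hg ⟨9 * q, by linear_combination hq⟩
  have e1 : g * f1 = 9 * q :=
    mul_left_cancel₀ three_ne' (by linear_combination hq - g * hf1)
  obtain ⟨f2, hf2⟩ := dvd_cancel3 g f1 hg ⟨3 * q, by linear_combination e1⟩
  have e2 : g * f2 = 3 * q :=
    mul_left_cancel₀ three_ne' (by linear_combination e1 - g * hf2)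
  obtain ⟨f3, hf3⟩ := dvd_cancel3 g f2 hg ⟨q, by linear_combination e2⟩
  exact ⟨f3, by linear_combination hf1 + 3 * hf2 + 9 * hf3⟩

private lemma combine_int {N : ℕ} (a b c : ℤ) (habc : a * b = c) (hab : IsCoprime a b)
    (f : MvPolynomial (Fin N) ℤ)
    (h1 : ((a : ℤ) : MvPolynomial (Fin N) ℤ) ∣ f)
    (h2 : ((b : ℤ) : MvPolynomial (Fin N) ℤ) ∣ f) :
    ((c : ℤ) : MvPolynomial (Fin N) ℤ) ∣ f := by
  subst habc
  rw [intCast_dvd_iff] at h1 h2 ⊢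
  intro m
  exact hab.mul_dvd (h1 m) (h2 m)

set_option maxHeartbeats 1000000 in
set_option synthInstance.maxHeartbeats 1000000 in
private lemma three_part {N : ℕ} (c4 c6 : MvPolynomial (Fin N) ℤ)
    (hne : MvPolynomial.map (Int.castRingHom (ZMod 3)) c4 ≠ 0)
    (h27 : (27 : MvPolynomial (Fin N) ℤ) ∣ (c4 ^ 3 - c6 ^ 2)) :
    ∃ t : MvPolynomial (Fin N) ℤ,
      (3 : MvPolynomial (Fin N) ℤ) ∣ (c4 - t ^ 2) ∧
      (3 : MvPolynomial (Fin N) ℤ) ∣ (t * c4 + c6) ∧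
      (27 : MvPolynomial (Fin N) ℤ) ∣ (t ^ 3 - 3 * t * c4 - 2 * c6) := by
  set π := MvPolynomial.map (Int.castRingHom (ZMod 3)) with hπdef
  -- reduce mod 3
  have h3 : (3 : MvPolynomial (Fin N) ℤ) ∣ (c4 ^ 3 - c6 ^ 2) :=
    dvd_trans ⟨9, by norm_num⟩ h27
  rw [dvd3_iff] at h3
  rw [map_sub, map_pow, map_pow] at h3
  have heq : (π c4) ^ 3 = (π c6) ^ 2 := by
    rw [← hπdef] at h3; linear_combination h3
  -- UFD argument: c4 ∣ c6 mod 3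
  have hd : π c4 ∣ π c6 := by
    refine (IsIntegrallyClosed.pow_dvd_pow_iff (n := 2) two_ne_zero).mp ⟨π c4, ?_⟩
    linear_combination - heq
  obtain ⟨w, hw⟩ := hd
  have hw2 : w ^ 2 = π c4 := by
    refine mul_left_cancel₀ (pow_ne_zero 2 hne) ?_
    show (π c4) ^ 2 * w ^ 2 = (π c4) ^ 2 * π c4
    linear_combination (-(π c6 + π c4 * w)) * hw - heq
  obtain ⟨t, ht⟩ := map_surjective (Int.castRingHom (ZMod 3))
    ZMod.intCast_surjective (-w)
  have ht' : π t = -w := ht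
  have d1 : (3 : MvPolynomial (Fin N) ℤ) ∣ (c4 - t ^ 2) := by
    rw [dvd3_iff, map_sub, map_pow, ← hπdef, ht']
    linear_combination - hw2
  have d2 : (3 : MvPolynomial (Fin N) ℤ) ∣ (t * c4 + c6) := by
    rw [dvd3_iff, map_add, map_mul, ← hπdef, ht', hw]
    ring
  refine ⟨t, d1, d2, ?_⟩
  -- now the mod 27 part
  obtain ⟨u, hu⟩ := d1
  obtain ⟨v, hv⟩ := d2
  obtain ⟨ww, hw27⟩ := h27
  have E1 : c4 * (u * c4 + 2 * v * t) = 9 * ww + 3 * v ^ 2 := by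
    refine mul_left_cancel₀ (three_ne' (N := N)) ?_
    linear_combination (-(c4 ^ 2)) * hu + hw27 + (3 * v - t * c4 + c6) * hv
  obtain ⟨m, hm⟩ := dvd_cancel3 c4 (u * c4 + 2 * v * t) hne
    ⟨3 * ww + v ^ 2, by linear_combination E1⟩
  have E2 : c4 * m = 3 * ww + v ^ 2 :=
    mul_left_cancel₀ (three_ne' (N := N)) (by linear_combination E1 - c4 * hm)
  have E4 : c4 ^ 2 * (t * u + 2 * v) = 9 * (t * ww - t * v ^ 2 + 2 * m * v) := by
    linear_combination (t * c4 + 6 * v) * hm + 2 * v * c4 * hu + 3 * t * E2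
  have E5 : t ^ 3 - 3 * t * c4 - 2 * c6 = -3 * t * u - 6 * v := by
    linear_combination (-t) * hu - 2 * hv
  have E6 : c4 * (c4 * (t ^ 3 - 3 * t * c4 - 2 * c6)) =
      27 * (-(t * ww - t * v ^ 2 + 2 * m * v)) := by
    linear_combination c4 ^ 2 * E5 - 3 * E4
  exact cancel27 c4 _ hne (cancel27 c4 _ hne
    ⟨-(t * ww - t * v ^ 2 + 2 * m * v), by linear_combination E6⟩)

set_option maxHeartbeats 1000000 in
private lemma two_part {N : ℕ} (c4 c6 a1 A B : MvPolynomial (Fin N) ℤ)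
    (hne : MvPolynomial.map (Int.castRingHom (ZMod 2)) c4 ≠ 0)
    (hA : a1 ^ 2 * c4 + c6 = 4 * A) (hB : c4 ^ 3 - c6 ^ 2 = 64 * B) :
    (8 : MvPolynomial (Fin N) ℤ) ∣ (c4 - (a1 ^ 2) ^ 2) ∧
    (16 : MvPolynomial (Fin N) ℤ) ∣ ((a1 ^ 2) ^ 3 - 3 * a1 ^ 2 * c4 - 2 * c6) := by
  set t := a1 ^ 2 with htdef
  have E1 : c4 ^ 2 * (c4 - t ^ 2) = 8 * (8 * B - A * t * c4 + 2 * A ^ 2) := by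
    linear_combination hB + (c6 + 4 * A - a1 ^ 2 * c4) * hA
  obtain ⟨u, hu⟩ := dvd_cancel2 c4 _ hne (dvd_cancel2 c4 (c4 * (c4 - t ^ 2)) hne
    ⟨4 * (8 * B - A * t * c4 + 2 * A ^ 2), by linear_combination E1⟩)
  have E2 : c4 ^ 2 * u = 4 * (8 * B - A * t * c4 + 2 * A ^ 2) :=
    mul_left_cancel₀ (two_ne' (N := N)) (by linear_combination E1 - c4 ^ 2 * hu)
  obtain ⟨u1, hu1⟩ := dvd_cancel2 c4 _ hne (dvd_cancel2 c4 (c4 * u) hne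
    ⟨2 * (8 * B - A * t * c4 + 2 * A ^ 2), by linear_combination E2⟩)
  have E3 : c4 ^ 2 * u1 = 2 * (8 * B - A * t * c4 + 2 * A ^ 2) :=
    mul_left_cancel₀ (two_ne' (N := N)) (by linear_combination E2 - c4 ^ 2 * hu1)
  obtain ⟨u2, hu2⟩ := dvd_cancel2 c4 _ hne (dvd_cancel2 c4 (c4 * u1) hne
    ⟨8 * B - A * t * c4 + 2 * A ^ 2, by linear_combination E3⟩)
  have E4 : c4 ^ 2 * u2 = 8 * B - A * t * c4 + 2 * A ^ 2 :=
    mul_left_cancel₀ (two_ne' (N := N)) (by linear_combination E3 - c4 ^ 2 * hu2)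
  have hu' : c4 - t ^ 2 = 8 * u2 := by linear_combination hu + 2 * hu1 + 4 * hu2
  obtain ⟨k, hk⟩ := dvd_cancel2 c4 (c4 * u2 - A * t) hne
    ⟨4 * B + A ^ 2 - A * t * c4, by linear_combination E4⟩
  obtain ⟨l, hl⟩ := dvd_cancel2 c4 (t * u2 + A) hne
    ⟨A * c4 - 4 * A * u2 + t * k, by linear_combination t * hk - A * hu'⟩
  constructor
  · exact ⟨u2, by linear_combination hu'⟩
  · exact ⟨-l, by linear_combination (-8) * hl - 2 * hA - t * hu'⟩

set_option maxHeartbeats 1000000 in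
/-- Existence of `b2` with the three congruences, given primitive `c4, c6`
with `c4^3 - c6^2 = 1728 Δ` and some `a1` with `a1^2 c4 + c6 ≡ 0 (mod 4)`. -/
theorem exists_b2 {N : ℕ} (c4 c6 Δ : MvPolynomial (Fin N) ℤ)
    (hc4prim : ∀ n : ℤ, (∀ m, n ∣ coeff m c4) → IsUnit n)
    (hc6prim : ∀ n : ℤ, (∀ m, n ∣ coeff m c6) → IsUnit n)
    (hΔ : c4 ^ 3 - c6 ^ 2 = 1728 * Δ)
    (ha1 : ∃ a1 : MvPolynomial (Fin N) ℤ,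
      (4 : MvPolynomial (Fin N) ℤ) ∣ (a1 ^ 2 * c4 + c6)) :
    ∃ b2 : MvPolynomial (Fin N) ℤ,
      (24 : MvPolynomial (Fin N) ℤ) ∣ (c4 - b2 ^ 2) ∧
      (12 : MvPolynomial (Fin N) ℤ) ∣ (b2 * c4 + c6) ∧
      (432 : MvPolynomial (Fin N) ℤ) ∣ (b2 ^ 3 - 3 * b2 * c4 - 2 * c6) := by
  -- nonvanishing of c4 mod 2 and mod 3
  have hne2 : MvPolynomial.map (Int.castRingHom (ZMod 2)) c4 ≠ 0 := by
    intro h0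
    rw [← dvd2_iff, show (2 : MvPolynomial (Fin N) ℤ) = ((2 : ℤ) : MvPolynomial (Fin N) ℤ) by
      push_cast; ring, intCast_dvd_iff] at h0
    have := hc4prim 2 h0
    rw [Int.isUnit_iff] at this
    omega
  have hne3 : MvPolynomial.map (Int.castRingHom (ZMod 3)) c4 ≠ 0 := by
    intro h0
    rw [← dvd3_iff, show (3 : MvPolynomial (Fin N) ℤ) = ((3 : ℤ) : MvPolynomial (Fin N) ℤ) by
      push_cast; ring, intCast_dvd_iff] at h0
    have := hc4prim 3 h0
    rw [Int.isUnit_iff] at this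
    omega
  obtain ⟨a1, A, hA⟩ := ha1
  have hB : c4 ^ 3 - c6 ^ 2 = 64 * (27 * Δ) := by linear_combination hΔ
  obtain ⟨h8, h16⟩ := two_part c4 c6 a1 A (27 * Δ) hne2 hA hB
  obtain ⟨t3, d31, d32, d33⟩ := three_part c4 c6 hne3 ⟨64 * Δ, by linear_combination hΔ⟩
  set b2 : MvPolynomial (Fin N) ℤ := 81 * a1 ^ 2 + 352 * t3 with hb2
  -- b2 ≡ a1^2 mod 16 and b2 ≡ t3 mod 27
  have m16 : (16 : MvPolynomial (Fin N) ℤ) ∣ (b2 - a1 ^ 2) :=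
    ⟨5 * a1 ^ 2 + 22 * t3, by rw [hb2]; ring⟩
  have m27 : (27 : MvPolynomial (Fin N) ℤ) ∣ (b2 - t3) :=
    ⟨3 * a1 ^ 2 + 13 * t3, by rw [hb2]; ring⟩
  have m8 : (8 : MvPolynomial (Fin N) ℤ) ∣ (b2 - a1 ^ 2) :=
    dvd_trans ⟨2, by norm_num⟩ m16
  have m4 : (4 : MvPolynomial (Fin N) ℤ) ∣ (b2 - a1 ^ 2) :=
    dvd_trans ⟨4, by norm_num⟩ m16
  have m3 : (3 : MvPolynomial (Fin N) ℤ) ∣ (b2 - t3) :=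
    dvd_trans ⟨9, by norm_num⟩ m27
  refine ⟨b2, ?_, ?_, ?_⟩
  · -- 24 ∣ c4 - b2^2
    have g8 : (8 : MvPolynomial (Fin N) ℤ) ∣ (c4 - b2 ^ 2) := by
      have e : c4 - b2 ^ 2 = (c4 - (a1 ^ 2) ^ 2) - (b2 - a1 ^ 2) * (b2 + a1 ^ 2) := by ring
      rw [e]
      exact dvd_sub h8 (m8.mul_right _)
    have g3 : (3 : MvPolynomial (Fin N) ℤ) ∣ (c4 - b2 ^ 2) := by
      have e : c4 - b2 ^ 2 = (c4 - t3 ^ 2) - (b2 - t3) * (b2 + t3) := by ring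
      rw [e]
      exact dvd_sub d31 (m3.mul_right _)
    have := combine_int (N := N) 8 3 24 (by norm_num) ⟨-1, 3, by norm_num⟩ _
      (by exact_mod_cast g8) (by exact_mod_cast g3)
    exact_mod_cast this
  · -- 12 ∣ b2*c4 + c6
    have g4 : (4 : MvPolynomial (Fin N) ℤ) ∣ (b2 * c4 + c6) := by
      have e : b2 * c4 + c6 = (a1 ^ 2 * c4 + c6) + (b2 - a1 ^ 2) * c4 := by ring
      rw [e]
      exact dvd_add ⟨A, by linear_combination hA⟩ (m4.mul_right _)
    have g3 : (3 : MvPolynomial (Fin N) ℤ) ∣ (b2 * c4 + c6) := by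
      have e : b2 * c4 + c6 = (t3 * c4 + c6) + (b2 - t3) * c4 := by ring
      rw [e]
      exact dvd_add d32 (m3.mul_right _)
    have := combine_int (N := N) 4 3 12 (by norm_num) ⟨1, -1, by norm_num⟩ _
      (by exact_mod_cast g4) (by exact_mod_cast g3)
    exact_mod_cast this
  · -- 432 ∣ b2^3 - 3 b2 c4 - 2 c6
    have g16 : (16 : MvPolynomial (Fin N) ℤ) ∣ (b2 ^ 3 - 3 * b2 * c4 - 2 * c6) := by
      have e : b2 ^ 3 - 3 * b2 * c4 - 2 * c6 =
          ((a1 ^ 2) ^ 3 - 3 * a1 ^ 2 * c4 - 2 * c6) +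
          (b2 - a1 ^ 2) * (b2 ^ 2 + b2 * a1 ^ 2 + (a1 ^ 2) ^ 2 - 3 * c4) := by ring
      rw [e]
      exact dvd_add h16 (m16.mul_right _)
    have g27 : (27 : MvPolynomial (Fin N) ℤ) ∣ (b2 ^ 3 - 3 * b2 * c4 - 2 * c6) := by
      have e : b2 ^ 3 - 3 * b2 * c4 - 2 * c6 =
          (t3 ^ 3 - 3 * t3 * c4 - 2 * c6) +
          (b2 - t3) * (b2 ^ 2 + b2 * t3 + t3 ^ 2 - 3 * c4) := by ring
      rw [e]
      exact dvd_add d33 (m27.mul_right _)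
    have := combine_int (N := N) 16 27 432 (by norm_num) ⟨-5, 3, by norm_num⟩ _
      (by exact_mod_cast g16) (by exact_mod_cast g27)
    exact_mod_cast this
end

section
/- Let Φ be a 5×5 alternating matrix over a commutative ring and let Pf(Φ) = (p_1,...,p_5) be the row vector where p_i is (-1)^{i-1} times the Pfaffian of the 4×4 submatrix obtained by deleting the i-th row and column of Φ. Then Pf(Φ)·Φ = 0. -/
open Matrix

/-- The Pfaffian of a 4×4 alternating matrix. -/
def pf4 {R : Type*} [CommRing R] (M : Matrix (Fin 4) (Fin 4) R) : R :=
  M 0 1 * M 2 3 - M 0 2 * M 1 3 + M 0 3 * M 1 2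

/-- The vector of signed 4×4 Pfaffians of a 5×5 alternating matrix:
`p i = (-1)^i` times the Pfaffian of the submatrix deleting row/column `i`. -/
def signedPf {R : Type*} [CommRing R] (M : Matrix (Fin 5) (Fin 5) R) (i : Fin 5) : R :=
  (-1 : R) ^ (i : ℕ) * pf4 (M.submatrix i.succAbove i.succAbove)

/-- For a 5×5 alternating matrix `Φ`, the row vector of signed 4×4
Pfaffians satisfies `Pf(Φ) · Φ = 0`. -/
theorem signedPf_vecMul_eq_zero {R : Type*} [CommRing R]
    (Φ : Matrix (Fin 5) (Fin 5) R) (halt : Φᵀ = -Φ) (hdiag : ∀ i, Φ i i = 0) :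
    ∀ j, (∑ i, signedPf Φ i * Φ i j) = 0 := by
  have hsk : ∀ i j, Φ j i = -Φ i j := fun i j => by
    have := congrFun (congrFun halt i) j
    simpa [Matrix.transpose_apply] using this
  intro j
  simp only [Fin.sum_univ_five, signedPf, pf4, Matrix.submatrix_apply]
  fin_cases j <;>
    simp +decide [Fin.succAbove, Fin.lt_def,
      show Fin.succ (2:Fin 4) = (3:Fin 5) from rfl, show Fin.succ (3:Fin 4) = (4:Fin 5) from rfl,
      show Fin.castSucc (2:Fin 4) = (2:Fin 5) from rfl, show Fin.castSucc (3:Fin 4) = (3:Fin 5) from rfl, hdiag, hsk 0 1, hsk 0 2, hsk 0 3, hsk 0 4,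
      hsk 1 2, hsk 1 3, hsk 1 4, hsk 2 3, hsk 2 4, hsk 3 4] <;> ring
end

section
/- Let Φ be a 5×5 alternating matrix over a commutative ring and A a 5×5 matrix. Then Pf(AΦA^T) = Pf(Φ)·adj(A), where adj(A) is the adjugate matrix and Pf is the vector of signed 4×4 Pfaffians. -/
open Matrix

set_option maxHeartbeats 1000000 in
theorem det_fin_four' {R : Type*} [CommRing R] (M : Matrix (Fin 4) (Fin 4) R) :
    M.det =
      M 0 0 * (M 1 1 * (M 2 2 * M 3 3 - M 2 3 * M 3 2) - M 1 2 * (M 2 1 * M 3 3 - M 2 3 * M 3 1)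
        + M 1 3 * (M 2 1 * M 3 2 - M 2 2 * M 3 1))
      - M 0 1 * (M 1 0 * (M 2 2 * M 3 3 - M 2 3 * M 3 2) - M 1 2 * (M 2 0 * M 3 3 - M 2 3 * M 3 0)
        + M 1 3 * (M 2 0 * M 3 2 - M 2 2 * M 3 0))
      + M 0 2 * (M 1 0 * (M 2 1 * M 3 3 - M 2 3 * M 3 1) - M 1 1 * (M 2 0 * M 3 3 - M 2 3 * M 3 0)
        + M 1 3 * (M 2 0 * M 3 1 - M 2 1 * M 3 0))
      - M 0 3 * (M 1 0 * (M 2 1 * M 3 2 - M 2 2 * M 3 1) - M 1 1 * (M 2 0 * M 3 2 - M 2 2 * M 3 0)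
        + M 1 2 * (M 2 0 * M 3 1 - M 2 1 * M 3 0)) := by
  rw [Matrix.det_succ_row_zero]
  simp [Fin.sum_univ_succ, Matrix.det_fin_three, Fin.succAbove,
    show (Fin.succ 2 : Fin 4) = 3 from rfl, show (Fin.castSucc 2 : Fin 4) = 2 from rfl]
  ring


set_option maxHeartbeats 2000000 in
/-- `Pf(A Φ Aᵀ) = Pf(Φ) · adj(A)` for a 5×5 alternating `Φ` and any 5×5 `A`. -/
theorem signedPf_conj {R : Type*} [CommRing R]
    (Φ A : Matrix (Fin 5) (Fin 5) R) (halt : Φᵀ = -Φ) (hdiag : ∀ i, Φ i i = 0) :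
    ∀ j, signedPf (A * Φ * Aᵀ) j = ∑ i, signedPf Φ i * A.adjugate i j := by
  have h : ∀ i j, Φ j i = -Φ i j := fun i j => by
    have := congrFun (congrFun halt i) j; simpa using this
  have hB : ∀ i j : Fin 5, (A * Φ * Aᵀ) i j = ∑ k, (∑ l, A i l * Φ l k) * A j k := by
    intro i j; simp [Matrix.mul_apply]
  intro j
  fin_cases j
  all_goals
      rw [Fin.sum_univ_five]
      simp only [signedPf, pf4, Matrix.adjugate_fin_succ_eq_det_submatrix, det_fin_four',
        Matrix.submatrix_apply,
        show ((0:Fin 5).succAbove 0) = 1 from rfl, show ((0:Fin 5).succAbove 1) = 2 from rfl,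
        show ((0:Fin 5).succAbove 2) = 3 from rfl, show ((0:Fin 5).succAbove 3) = 4 from rfl,
        show ((1:Fin 5).succAbove 0) = 0 from rfl, show ((1:Fin 5).succAbove 1) = 2 from rfl,
        show ((1:Fin 5).succAbove 2) = 3 from rfl, show ((1:Fin 5).succAbove 3) = 4 from rfl,
        show ((2:Fin 5).succAbove 0) = 0 from rfl, show ((2:Fin 5).succAbove 1) = 1 from rfl,
        show ((2:Fin 5).succAbove 2) = 3 from rfl, show ((2:Fin 5).succAbove 3) = 4 from rfl,
        show ((3:Fin 5).succAbove 0) = 0 from rfl, show ((3:Fin 5).succAbove 1) = 1 from rfl,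
        show ((3:Fin 5).succAbove 2) = 2 from rfl, show ((3:Fin 5).succAbove 3) = 4 from rfl,
        show ((4:Fin 5).succAbove 0) = 0 from rfl, show ((4:Fin 5).succAbove 1) = 1 from rfl,
        show ((4:Fin 5).succAbove 2) = 2 from rfl, show ((4:Fin 5).succAbove 3) = 3 from rfl]
      simp only [show ((0:Fin 5):ℕ) = 0 from rfl, show ((1:Fin 5):ℕ) = 1 from rfl,
        show ((2:Fin 5):ℕ) = 2 from rfl, show ((3:Fin 5):ℕ) = 3 from rfl,
        show ((4:Fin 5):ℕ) = 4 from rfl]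
      norm_num
      simp only [hB, Fin.sum_univ_five]
      rw [show Φ 1 0 = -Φ 0 1 from h 0 1, show Φ 2 0 = -Φ 0 2 from h 0 2,
        show Φ 3 0 = -Φ 0 3 from h 0 3, show Φ 4 0 = -Φ 0 4 from h 0 4,
        show Φ 2 1 = -Φ 1 2 from h 1 2, show Φ 3 1 = -Φ 1 3 from h 1 3,
        show Φ 4 1 = -Φ 1 4 from h 1 4, show Φ 3 2 = -Φ 2 3 from h 2 3,
        show Φ 4 2 = -Φ 2 4 from h 2 4, show Φ 4 3 = -Φ 3 4 from h 3 4,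
        hdiag 0, hdiag 1, hdiag 2, hdiag 3, hdiag 4]
      ring
end

section
/- Define the set of weights W = {(r,s) ∈ ℤ^5 × ℤ^5 : r_1 ≤ ... ≤ r_5, s_1 ≤ ... ≤ s_5, 2·Σr_i = 1 + Σs_i}. Say (r,s) dominates (r',s') if max(r_i + r_j - s_k, 0) ≥ max(r'_i + r'_j - s'_k, 0) for all 1 ≤ i < j ≤ 5 and 1 ≤ k ≤ 5. Then every weight (r,s) ∈ W with r_1 + r_4 ≤ s_1 and r_2 + r_3 ≤ s_1 dominates one of the seven weights w_1 = (0,0,0,0,1;0,0,0,0,1), w_2 = (0,0,1,1,1;1,1,1,1,1), w_3 = (0,0,1,1,2;1,1,1,2,2), w_4 = (0,1,1,2,2;2,2,2,2,3), w_5 = (0,1,1,2,3;2,2,2,3,4), w_6 = (0,1,1,2,3;2,2,3,3,3), w_7 = (0,1,2,3,4;3,3,4,4,5). -/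
/-- `(r,s)` is a weight: both tuples are increasing and `2Σr = 1 + Σs`. -/
def IsWeight (r s : Fin 5 → ℤ) : Prop :=
  Monotone r ∧ Monotone s ∧ 2 * ∑ i, r i = 1 + ∑ i, s i

/-- `(r,s)` dominates `(r',s')`. -/
def Dominates (r s r' s' : Fin 5 → ℤ) : Prop :=
  ∀ i j k : Fin 5, i < j →
    max (r' i + r' j - s' k) 0 ≤ max (r i + r j - s k) 0

lemma max_le_max0 {a b : ℤ} (h : a ≤ 0 ∨ a ≤ b) : max a 0 ≤ max b 0 := by
  rcases h with h | h
  · exact max_le (h.trans (le_max_right b 0)) (le_max_right b 0)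
  · exact max_le (h.trans (le_max_left b 0)) (le_max_right b 0)

set_option maxHeartbeats 1000000

section doms
variable (r s : Fin 5 → ℤ)
  (h01 : r 0 ≤ r 1) (h12 : r 1 ≤ r 2) (h23 : r 2 ≤ r 3) (h34 : r 3 ≤ r 4)
  (g01 : s 0 ≤ s 1) (g12 : s 1 ≤ s 2) (g23 : s 2 ≤ s 3) (g34 : s 3 ≤ s 4)

include h01 h12 h23 h34 g01 g12 g23 g34

lemma dom1 (c1 : s 3 + 1 ≤ r 0 + r 4) :
    Dominates r s ![0,0,0,0,1] ![0,0,0,0,1] := by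
  intro i j k hij
  apply max_le_max0
  fin_cases i <;> fin_cases j <;>
    first
    | exact absurd hij (by decide)
    | (fin_cases k <;> (simp <;> omega))

lemma dom2 (c1 : s 4 + 1 ≤ r 2 + r 3) :
    Dominates r s ![0,0,1,1,1] ![1,1,1,1,1] := by
  intro i j k hij
  apply max_le_max0
  fin_cases i <;> fin_cases j <;>
    first
    | exact absurd hij (by decide)
    | (fin_cases k <;> (simp <;> omega))

lemma dom3 (c1 : s 2 + 1 ≤ r 0 + r 4) (c2 : s 2 + 1 ≤ r 2 + r 3)
    (c3 : s 2 + 2 ≤ r 2 + r 4) (c4 : s 4 + 1 ≤ r 2 + r 4) :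
    Dominates r s ![0,0,1,1,2] ![1,1,1,2,2] := by
  intro i j k hij
  apply max_le_max0
  fin_cases i <;> fin_cases j <;>
    first
    | exact absurd hij (by decide)
    | (fin_cases k <;> (simp <;> omega))

lemma dom4 (c1 : s 3 + 1 ≤ r 1 + r 3) (c2 : s 3 + 2 ≤ r 3 + r 4)
    (c3 : s 4 + 1 ≤ r 3 + r 4) :
    Dominates r s ![0,1,1,2,2] ![2,2,2,2,3] := by
  intro i j k hij
  apply max_le_max0
  fin_cases i <;> fin_cases j <;>
    first
    | exact absurd hij (by decide)
    | (fin_cases k <;> (simp <;> omega))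

lemma dom5 (c1 : s 2 + 1 ≤ r 0 + r 4) (c2 : s 2 + 1 ≤ r 1 + r 3)
    (c3 : s 2 + 2 ≤ r 1 + r 4) (c4 : s 3 + 1 ≤ r 1 + r 4)
    (c5 : s 2 + 3 ≤ r 3 + r 4) (c6 : s 3 + 2 ≤ r 3 + r 4)
    (c7 : s 4 + 1 ≤ r 3 + r 4) :
    Dominates r s ![0,1,1,2,3] ![2,2,2,3,4] := by
  intro i j k hij
  apply max_le_max0
  fin_cases i <;> fin_cases j <;>
    first
    | exact absurd hij (by decide)
    | (fin_cases k <;> (simp <;> omega))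

lemma dom6 (c1 : s 1 + 1 ≤ r 0 + r 4) (c2 : s 1 + 1 ≤ r 1 + r 3)
    (c3 : s 1 + 2 ≤ r 1 + r 4) (c4 : s 4 + 1 ≤ r 1 + r 4)
    (c5 : s 1 + 3 ≤ r 3 + r 4) (c6 : s 4 + 2 ≤ r 3 + r 4) :
    Dominates r s ![0,1,1,2,3] ![2,2,3,3,3] := by
  intro i j k hij
  apply max_le_max0
  fin_cases i <;> fin_cases j <;>
    first
    | exact absurd hij (by decide)
    | (fin_cases k <;> (simp <;> omega))

lemma dom7 (c1 : s 1 + 1 ≤ r 0 + r 4) (c2 : s 1 + 1 ≤ r 1 + r 3)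
    (c3 : s 1 + 2 ≤ r 1 + r 4) (c4 : s 1 + 2 ≤ r 2 + r 3)
    (c5 : s 3 + 1 ≤ r 1 + r 4) (c6 : s 3 + 1 ≤ r 2 + r 3)
    (c7 : s 1 + 3 ≤ r 2 + r 4) (c8 : s 3 + 2 ≤ r 2 + r 4)
    (c9 : s 4 + 1 ≤ r 2 + r 4) (c10 : s 1 + 4 ≤ r 3 + r 4)
    (c11 : s 3 + 3 ≤ r 3 + r 4) (c12 : s 4 + 2 ≤ r 3 + r 4) :
    Dominates r s ![0,1,2,3,4] ![3,3,4,4,5] := by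
  intro i j k hij
  apply max_le_max0
  fin_cases i <;> fin_cases j <;>
    first
    | exact absurd hij (by decide)
    | (fin_cases k <;> (simp <;> omega))

end doms

/-- Every weight `(r,s)` with `r₁+r₄ ≤ s₁` and `r₂+r₃ ≤ s₁` dominates one of
the seven listed weights. -/
theorem weight_dominates_one_of_seven (r s : Fin 5 → ℤ)
    (hw : IsWeight r s) (h14 : r 0 + r 3 ≤ s 0) (h23 : r 1 + r 2 ≤ s 0) :
    ∃ w ∈ [((![0,0,0,0,1], ![0,0,0,0,1]) : (Fin 5 → ℤ) × (Fin 5 → ℤ)),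
           (![0,0,1,1,1], ![1,1,1,1,1]),
           (![0,0,1,1,2], ![1,1,1,2,2]),
           (![0,1,1,2,2], ![2,2,2,2,3]),
           (![0,1,1,2,3], ![2,2,2,3,4]),
           (![0,1,1,2,3], ![2,2,3,3,3]),
           (![0,1,2,3,4], ![3,3,4,4,5])],
      Dominates r s w.1 w.2 := by
  obtain ⟨hr, hs, hsum⟩ := hw
  have h01 : r 0 ≤ r 1 := hr (by decide)
  have h12 : r 1 ≤ r 2 := hr (by decide)
  have h23' : r 2 ≤ r 3 := hr (by decide)
  have h34 : r 3 ≤ r 4 := hr (by decide)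
  have g01 : s 0 ≤ s 1 := hs (by decide)
  have g12 : s 1 ≤ s 2 := hs (by decide)
  have g23 : s 2 ≤ s 3 := hs (by decide)
  have g34 : s 3 ≤ s 4 := hs (by decide)
  rw [Fin.sum_univ_five, Fin.sum_univ_five] at hsum
  rcases le_or_gt (s 3 + 1) (r 0 + r 4) with a1 | a1
  · exact ⟨(![0,0,0,0,1], ![0,0,0,0,1]), List.mem_cons_self, dom1 r s h01 h12 h23' h34 g01 g12 g23 g34 a1⟩
  rcases le_or_gt (s 4 + 1) (r 2 + r 3) with a2 | a2
  · exact ⟨(![0,0,1,1,1], ![1,1,1,1,1]), List.mem_cons_of_mem _ (List.mem_cons_self), dom2 r s h01 h12 h23' h34 g01 g12 g23 g34 a2⟩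
  rcases le_or_gt (s 2 + 1) (r 0 + r 4) with b1 | b1
  · rcases le_or_gt (s 2 + 1) (r 1 + r 3) with b2 | b2
    · rcases le_or_gt (s 3 + 1) (r 1 + r 4) with b3 | b3
      · -- D5
        exact ⟨(![0,1,1,2,3], ![2,2,2,3,4]), List.mem_cons_of_mem _ (List.mem_cons_of_mem _ (List.mem_cons_of_mem _ (List.mem_cons_of_mem _ (List.mem_cons_self)))), dom5 r s h01 h12 h23' h34 g01 g12 g23 g34
          (by omega) (by omega) (by omega) (by omega) (by omega) (by omega) (by omega)⟩
      · -- D3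
        exact ⟨(![0,0,1,1,2], ![1,1,1,2,2]), List.mem_cons_of_mem _ (List.mem_cons_of_mem _ (List.mem_cons_self)), dom3 r s h01 h12 h23' h34 g01 g12 g23 g34
          (by omega) (by omega) (by omega) (by omega)⟩
    · rcases le_or_gt (s 2 + 1) (r 2 + r 3) with b3 | b3
      · -- D3
        exact ⟨(![0,0,1,1,2], ![1,1,1,2,2]), List.mem_cons_of_mem _ (List.mem_cons_of_mem _ (List.mem_cons_self)), dom3 r s h01 h12 h23' h34 g01 g12 g23 g34
          (by omega) (by omega) (by omega) (by omega)⟩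
      · -- D6
        exact ⟨(![0,1,1,2,3], ![2,2,3,3,3]), List.mem_cons_of_mem _ (List.mem_cons_of_mem _ (List.mem_cons_of_mem _ (List.mem_cons_of_mem _ (List.mem_cons_of_mem _ (List.mem_cons_self))))), dom6 r s h01 h12 h23' h34 g01 g12 g23 g34
          (by omega) (by omega) (by omega) (by omega) (by omega) (by omega)⟩
  · rcases le_or_gt (s 3 + 1) (r 1 + r 3) with b2 | b2
    · -- D4
      exact ⟨(![0,1,1,2,2], ![2,2,2,2,3]), List.mem_cons_of_mem _ (List.mem_cons_of_mem _ (List.mem_cons_of_mem _ (List.mem_cons_self))), dom4 r s h01 h12 h23' h34 g01 g12 g23 g34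
        (by omega) (by omega) (by omega)⟩
    · rcases le_or_gt (s 4 + 1) (r 1 + r 4) with b3 | b3
      · -- D6
        exact ⟨(![0,1,1,2,3], ![2,2,3,3,3]), List.mem_cons_of_mem _ (List.mem_cons_of_mem _ (List.mem_cons_of_mem _ (List.mem_cons_of_mem _ (List.mem_cons_of_mem _ (List.mem_cons_self))))), dom6 r s h01 h12 h23' h34 g01 g12 g23 g34
          (by omega) (by omega) (by omega) (by omega) (by omega) (by omega)⟩
      · -- D7
        exact ⟨(![0,1,2,3,4], ![3,3,4,4,5]), List.mem_cons_of_mem _ (List.mem_cons_of_mem _ (List.mem_cons_of_mem _ (List.mem_cons_of_mem _ (List.mem_cons_of_mem _ (List.mem_cons_of_mem _ (List.mem_cons_self)))))), dom7 r s h01 h12 h23' h34 g01 g12 g23 g34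
          (by omega) (by omega) (by omega) (by omega) (by omega) (by omega)
          (by omega) (by omega) (by omega) (by omega) (by omega) (by omega)⟩
end

section
/- Let k be a field of characteristic not equal to 5. Then the polynomials c4(λ,μ) = λ^4 + 228λ^3μ + 494λ^2μ^2 - 228λμ^3 + μ^4 and Δ(λ,μ) = λμ(λ^2 - 11λμ - μ^2)^5 have no common nonzero root in k^2; equivalently, if (λ,μ) ∈ k^2 with (λ,μ) ≠ (0,0) satisfies c4(λ,μ) = 0 and Δ(λ,μ) = 0, then char(k) = 5. -/
/-- If a nonzero `(λ,μ) ∈ k²` is a common root of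
`c4(λ,μ) = λ⁴ + 228λ³μ + 494λ²μ² - 228λμ³ + μ⁴` and
`Δ(λ,μ) = λμ(λ² - 11λμ - μ²)⁵`, then `char k = 5`. -/
theorem common_root_implies_char_five {k : Type*} [Field k] (l m : k)
    (h0 : ¬(l = 0 ∧ m = 0))
    (hc4 : l ^ 4 + 228 * l ^ 3 * m + 494 * l ^ 2 * m ^ 2
      - 228 * l * m ^ 3 + m ^ 4 = 0)
    (hΔ : l * m * (l ^ 2 - 11 * l * m - m ^ 2) ^ 5 = 0) :
    ringChar k = 5 := by
  have h5 : (5 : k) = 0 := by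
    by_contra h5
    rcases mul_eq_zero.mp hΔ with hlm | hq
    · rcases mul_eq_zero.mp hlm with hl | hm
      · apply h0
        refine ⟨hl, ?_⟩
        have : m ^ 4 = 0 := by linear_combination hc4 - hl*(l^3+228*l^2*m+494*l*m^2-228*m^3)
        exact pow_eq_zero_iff (n := 4) (by norm_num) |>.mp this
      · apply h0
        refine ⟨?_, hm⟩
        have : l ^ 4 = 0 := by linear_combination hc4 - hm*(228*l^3 + 494*l^2*m - 228*l*m^2 + m^3)
        exact pow_eq_zero_iff (n := 4) (by norm_num) |>.mp this
    · have hq' : l ^ 2 - 11 * l * m - m ^ 2 = 0 :=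
        pow_eq_zero_iff (n := 5) (by norm_num) |>.mp hq
      have key : (3125 : k) * (m ^ 3 * (11 * l + m)) = 0 := by
        linear_combination hc4 - (l ^ 2 + 239 * l * m + 3124 * m ^ 2) * hq'
      have h3125 : (3125 : k) ≠ 0 := by
        intro h
        apply h5
        have : (5 : k) ^ 5 = 0 := by norm_num; linear_combination h
        exact pow_eq_zero_iff (n := 5) (by norm_num) |>.mp this
      have hmm : m ^ 3 * (11 * l + m) = 0 := by
        rcases mul_eq_zero.mp key with h | h
        · exact absurd h h3125
        · exact h
      rcases mul_eq_zero.mp hmm with h | h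
      · have hm : m = 0 := pow_eq_zero_iff (n := 3) (by norm_num) |>.mp h
        have hl : l = 0 := by
          have : l ^ 2 = 0 := by rw [hm] at hq'; linear_combination hq'
          exact pow_eq_zero_iff (n := 2) (by norm_num) |>.mp this
        exact h0 ⟨hl, hm⟩
      · have hm : m = -11 * l := by linear_combination h
        have hl : l = 0 := by
          have : l ^ 2 = 0 := by rw [hm] at hq'; linear_combination hq'
          exact pow_eq_zero_iff (n := 2) (by norm_num) |>.mp this
        exact h0 ⟨hl, by rw [hm, hl]; ring⟩
  have hdvd : ringChar k ∣ 5 := by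
    rw [← ringChar.spec] at *
    exact_mod_cast h5
  rcases (Nat.Prime.eq_one_or_self_of_dvd (by norm_num) _ hdvd) with h1 | h5'
  · exact absurd h1 (CharP.ringChar_ne_one)
  · exact h5'
end

section
/- Let Φ be the 5×5 alternating matrix of linear forms over ℚ with Φ_{12} = x_1, Φ_{13} = 0, Φ_{14} = x_2, Φ_{15} = x_3, Φ_{23} = x_2, Φ_{24} = x_3, Φ_{25} = x_4, Φ_{34} = x_4, Φ_{35} = x_5, Φ_{45} = 0. Then for all (s:t), the point (x_1,x_2,x_3,x_4,x_5) = (-s^5, s^3t^2, s^2t^3, st^4, t^5) makes all five signed 4×4 Pfaffians of Φ vanish. -/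
/-- The cuspidal quintic `(s:t) ↦ (-s⁵ : s³t² : s²t³ : st⁴ : t⁵)` lies on the
curve cut out by the 4×4 Pfaffians of the model with
`Φ₁₂ = x₁, Φ₁₄ = x₂, Φ₁₅ = x₃, Φ₂₃ = x₂, Φ₂₄ = x₃, Φ₂₅ = x₄, Φ₃₄ = x₄,
Φ₃₅ = x₅` and `Φ₁₃ = Φ₄₅ = 0`. -/
theorem cuspidal_parametrisation (s t : ℚ) :
    ∀ i : Fin 5,
      signedPf
        (let x1 : ℚ := -s ^ 5
         let x2 : ℚ := s ^ 3 * t ^ 2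
         let x3 : ℚ := s ^ 2 * t ^ 3
         let x4 : ℚ := s * t ^ 4
         let x5 : ℚ := t ^ 5
         !![0, x1, 0, x2, x3;
            -x1, 0, x2, x3, x4;
            0, -x2, 0, x4, x5;
            -x2, -x3, -x4, 0, 0;
            -x3, -x4, -x5, 0, 0]) i = 0 := by
  intro i
  fin_cases i <;>
    · simp only [signedPf, pf4, Fin.succAbove, Matrix.submatrix_apply]
      norm_num [Fin.lt_def, Fin.succ, Fin.castSucc, Fin.castAdd, Fin.castLE,
        Matrix.cons_val_zero, Matrix.cons_val_one, Matrix.head_cons,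
        Matrix.cons_val_succ, show ((3:Fin 4):ℕ) = 3 from rfl]
      ring
end

section
/- Let k be an algebraically closed field and ψ a 3×2 matrix of linear forms in k[x_1,x_2,x_3,x_4] whose three 2×2 minors are linearly independent and such that no nonzero linear combination of the minors is a quadratic form of rank 1. If the scheme Γ = {rank ψ ≤ 1} ⊂ P^3 has a point P where ψ(P) = 0, then for every other point Q ∈ Γ, ψ(Q) has rank exactly 1. -/
open MvPolynomial Matrix

section Aux
variable {k : Type*} [Field k]

noncomputable def lf (a : Fin 4 → k) : MvPolynomial (Fin 4) k := ∑ v, C (a v) * X v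

lemma lf_hom (a : Fin 4 → k) : (lf a).IsHomogeneous 1 :=
  IsHomogeneous.sum _ _ _ fun v _ => isHomogeneous_C_mul_X _ _

lemma eval_lf (a R : Fin 4 → k) : eval R (lf a) = ∑ v, a v * R v := by
  simp [lf]

lemma lf_smul_add (α β : k) (u w : Fin 4 → k) :
    lf (α • u + β • w) = C α * lf u + C β * lf w := by
  simp only [lf, Finset.mul_sum, ← Finset.sum_add_distrib]
  refine Finset.sum_congr rfl fun v _ => ?_
  simp only [Pi.add_apply, Pi.smul_apply, smul_eq_mul, _root_.map_add, _root_.map_mul]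
  ring

lemma degree_one_repr (d : Fin 4 →₀ ℕ) (h : (Finsupp.weight (1 : Fin 4 → ℕ)) d = 1) :
    ∃ v, d = Finsupp.single v 1 := by
  have hd : d 0 + d 1 + d 2 + d 3 = 1 := by
    have : ∑ v : Fin 4, d v = 1 := by
      rw [← h]
      rw [Finsupp.weight_apply, Finsupp.sum_fintype]
      · simp [Fin.sum_univ_four]
      · intro; simp
    simpa [Fin.sum_univ_four] using this
  have : (d 0 = 1 ∧ d 1 = 0 ∧ d 2 = 0 ∧ d 3 = 0) ∨ (d 1 = 1 ∧ d 0 = 0 ∧ d 2 = 0 ∧ d 3 = 0)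
      ∨ (d 2 = 1 ∧ d 0 = 0 ∧ d 1 = 0 ∧ d 3 = 0) ∨ (d 3 = 1 ∧ d 0 = 0 ∧ d 1 = 0 ∧ d 2 = 0) := by
    omega
  rcases this with ⟨h1, h2, h3, h4⟩ | ⟨h1, h2, h3, h4⟩ | ⟨h1, h2, h3, h4⟩ | ⟨h1, h2, h3, h4⟩
  · exact ⟨0, by ext v; fin_cases v <;> simp_all [Finsupp.single_apply]⟩
  · exact ⟨1, by ext v; fin_cases v <;> simp_all [Finsupp.single_apply]⟩
  · exact ⟨2, by ext v; fin_cases v <;> simp_all [Finsupp.single_apply]⟩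
  · exact ⟨3, by ext v; fin_cases v <;> simp_all [Finsupp.single_apply]⟩

lemma lf_repr {p : MvPolynomial (Fin 4) k} (hp : p.IsHomogeneous 1) :
    p = lf (fun v => coeff (Finsupp.single v 1) p) := by
  ext d
  rw [lf, coeff_sum]
  simp only [coeff_C_mul, coeff_X', mul_ite, mul_one, mul_zero]
  by_cases hd : ∃ v, d = Finsupp.single v 1
  · obtain ⟨v, rfl⟩ := hd
    rw [Finset.sum_eq_single v]
    · simp
    · intro w _ hw
      rw [if_neg]
      intro hc
      exact hw ((Finsupp.single_left_inj one_ne_zero).mp hc)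
    · simp
  · have hz : coeff d p = 0 := by
      by_contra h
      exact hd (degree_one_repr d (hp h))
    rw [hz]
    refine (Finset.sum_eq_zero fun v _ => ?_).symm
    rw [if_neg]
    intro hc
    exact hd ⟨v, hc.symm⟩

lemma rank_one_aux (N : Matrix (Fin 3) (Fin 2) k) (hN : N ≠ 0)
    (hdep : ∀ a b : Fin 3, N a 0 * N b 1 = N a 1 * N b 0) : N.rank = 1 := by
  have hrange : Set.range Nᵀ = {Nᵀ 0, Nᵀ 1} := by
    ext x
    constructor
    · rintro ⟨j, rfl⟩
      fin_cases j <;> simp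
    · rintro (rfl | rfl)
      exacts [⟨0, rfl⟩, ⟨1, rfl⟩]
  obtain ⟨v, hv, hspan⟩ : ∃ v : Fin 3 → k, v ≠ 0 ∧
      Submodule.span k (Set.range Nᵀ) = Submodule.span k {v} := by
    by_cases h0 : Nᵀ 0 = 0
    · refine ⟨Nᵀ 1, ?_, ?_⟩
      · intro h1
        apply hN
        ext i j
        fin_cases j
        · exact congrFun h0 i
        · exact congrFun h1 i
      · rw [hrange, h0]
        refine le_antisymm (Submodule.span_le.2 ?_) (Submodule.span_le.2 ?_)
        · rintro x (rfl | rfl)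
          · exact Submodule.zero_mem _
          · exact Submodule.mem_span_singleton_self _
        · rintro x rfl
          exact Submodule.subset_span (by simp)
    · refine ⟨Nᵀ 0, h0, ?_⟩
      rw [hrange]
      have hm : ∃ m, N m 0 ≠ 0 := by
        by_contra h
        push_neg at h
        exact h0 (funext h)
      obtain ⟨m, hm⟩ := hm
      have hcol : Nᵀ 1 = (N m 1 / N m 0) • Nᵀ 0 := by
        funext i
        have : N i 1 = N i 0 * N m 1 / N m 0 := by
          field_simp
          linear_combination -hdep i m
        simp [Matrix.transpose_apply, this]
        ring
      refine le_antisymm (Submodule.span_le.2 ?_) (Submodule.span_le.2 ?_)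
      · rintro x (rfl | rfl)
        · exact Submodule.mem_span_singleton_self _
        · rw [hcol]
          exact Submodule.smul_mem _ _ (Submodule.mem_span_singleton_self _)
      · rintro x rfl
        exact Submodule.subset_span (by simp)
  rw [Matrix.rank_eq_finrank_span_cols, Matrix.col, hspan, finrank_span_singleton hv]

end Aux

/-- Let `ψ` be a 3×2 matrix of linear forms in 4 variables over an
algebraically closed field whose 2×2 minors are linearly independent and no
nonzero linear combination of the minors is the square of a linear form.
If `ψ` vanishes identically at a point `P` of `P³`, then at every other
point `Q` of the locus `{rank ψ ≤ 1}`, the matrix `ψ(Q)` has rank exactly 1. -/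
theorem rank_one_at_other_points {k : Type*} [Field k] [IsAlgClosed k]
    (ψ : Matrix (Fin 3) (Fin 2) (MvPolynomial (Fin 4) k))
    (hlin : ∀ i j, (ψ i j).IsHomogeneous 1)
    (minor : Fin 3 → MvPolynomial (Fin 4) k)
    (hminor : minor = fun i =>
      ψ (i + 1) 0 * ψ (i + 2) 1 - ψ (i + 1) 1 * ψ (i + 2) 0)
    (hindep : ∀ c : Fin 3 → k, (∑ i, C (c i) * minor i) = 0 → c = 0)
    (hrank1 : ∀ c : Fin 3 → k, c ≠ 0 →
      ¬ ∃ ℓ : MvPolynomial (Fin 4) k, ℓ.IsHomogeneous 1 ∧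
        (∑ i, C (c i) * minor i) = ℓ ^ 2)
    (P : Fin 4 → k) (hP : P ≠ 0) (hψP : ∀ i j, eval P (ψ i j) = 0)
    (Q : Fin 4 → k) (hQ : Q ≠ 0) (hPQ : ¬ ∃ c : k, Q = c • P)
    (hQΓ : ∀ i, eval Q (minor i) = 0) :
    (Matrix.of fun i j => eval Q (ψ i j)).rank = 1 := by
  classical
  set N : Matrix (Fin 3) (Fin 2) k := Matrix.of fun i j => eval Q (ψ i j) with hNdef
  -- cross equations for the columns of N
  have hev : ∀ i : Fin 3,
      eval Q (ψ (i + 1) 0) * eval Q (ψ (i + 2) 1)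
        - eval Q (ψ (i + 1) 1) * eval Q (ψ (i + 2) 0) = 0 := by
    intro i
    have := hQΓ i
    rw [hminor] at this
    simpa using this
  have hcross : ∀ a b : Fin 3, N a 0 * N b 1 = N a 1 * N b 0 := by
    have e0 : N 1 0 * N 2 1 - N 1 1 * N 2 0 = 0 := hev 0
    have e1 : N 2 0 * N 0 1 - N 2 1 * N 0 0 = 0 := hev 1
    have e2 : N 0 0 * N 1 1 - N 0 1 * N 1 0 = 0 := hev 2
    have h2 : (⟨2, by norm_num⟩ : Fin 3) = 2 := rfl
    intro a b
    fin_cases a <;> fin_cases b <;>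
      simp only [Fin.zero_eta, Fin.mk_one, h2] <;>
      first
        | ring1
        | linear_combination e0
        | linear_combination -e0
        | linear_combination e1
        | linear_combination -e1
        | linear_combination e2
        | linear_combination -e2
  have hN0 : N ≠ 0 := by
    intro hzero
    have hQ0 : ∀ i j, eval Q (ψ i j) = 0 := by
      intro i j
      exact congrFun (congrFun hzero i) j
    -- coefficient vectors of the linear forms
    have hrepr : ∀ i j, ψ i j = lf (fun v => coeff (Finsupp.single v 1) (ψ i j)) :=
      fun i j => lf_repr (hlin i j)
    set a : Fin 3 → Fin 2 → Fin 4 → k := fun i j v => coeff (Finsupp.single v 1) (ψ i j)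
      with hadef
    have hrepr' : ∀ i j, ψ i j = lf (a i j) := hrepr
    have heval : ∀ (i : Fin 3) (j : Fin 2) (R : Fin 4 → k),
        eval R (ψ i j) = ∑ v, a i j v * R v := by
      intro i j R
      conv_lhs => rw [hrepr' i j]
      rw [eval_lf]
    -- P and Q are linearly independent
    have hPQind : LinearIndependent k ![P, Q] := by
      rw [linearIndependent_fin2]
      constructor
      · simpa using hQ
      · intro t hPt
        have hPt' : t • Q = P := by simpa using hPt
        have ht : t ≠ 0 := by
          rintro rfl
          rw [zero_smul] at hPt'
          exact hP hPt'.symm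
        exact hPQ ⟨t⁻¹, by rw [← hPt', smul_smul, inv_mul_cancel₀ ht, one_smul]⟩
    set Mpq : Matrix (Fin 2) (Fin 4) k := ![P, Q] with hMpq
    have hrankM : Mpq.rank = 2 := by
      rw [Matrix.rank_eq_finrank_span_row]
      rw [Matrix.row]
      exact (finrank_span_eq_card hPQind).trans (by simp)
    have hker : Module.finrank k (LinearMap.ker Mpq.mulVecLin) = 2 := by
      have h4 : Module.finrank k (Fin 4 → k) = 4 := by simp
      have hrn := LinearMap.finrank_range_add_finrank_ker Mpq.mulVecLin
      rw [h4] at hrn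
      have : Mpq.rank = Module.finrank k (LinearMap.range Mpq.mulVecLin) := rfl
      omega
    set W := LinearMap.ker Mpq.mulVecLin with hW
    let b : Module.Basis (Fin 2) k W := Module.finBasisOfFinrankEq k W hker
    set u : Fin 4 → k := (b 0 : Fin 4 → k) with hu
    set w : Fin 4 → k := (b 1 : Fin 4 → k) with hw
    have hmem : ∀ i j, a i j ∈ W := by
      intro i j
      rw [hW, LinearMap.mem_ker, Matrix.mulVecLin_apply]
      have hP' : ∑ v, a i j v * P v = 0 := by rw [← heval i j P]; exact hψP i j
      have hQ' : ∑ v, a i j v * Q v = 0 := by rw [← heval i j Q]; exact hQ0 i j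
      funext r
      fin_cases r
      · simp only [hMpq, Matrix.mulVec, dotProduct, Fin.zero_eta,
          Matrix.cons_val_zero, Pi.zero_apply]
        rw [Finset.sum_congr rfl fun v _ => mul_comm (P v) (a i j v)]
        exact hP'
      · simp only [hMpq, Matrix.mulVec, dotProduct, Fin.mk_one,
          Matrix.cons_val_one, Matrix.head_cons, Matrix.cons_val_zero, Pi.zero_apply]
        rw [Finset.sum_congr rfl fun v _ => mul_comm (Q v) (a i j v)]
        exact hQ'
    have hdecomp : ∀ i j, ∃ α β : k, a i j = α • u + β • w := by
      intro i j
      refine ⟨b.repr ⟨a i j, hmem i j⟩ 0, b.repr ⟨a i j, hmem i j⟩ 1, ?_⟩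
      have hsum := b.sum_repr ⟨a i j, hmem i j⟩
      rw [Fin.sum_univ_two] at hsum
      have h2 := congrArg (Subtype.val) hsum
      simp only [Submodule.coe_add, SetLike.val_smul] at h2
      exact h2.symm
    choose α β hαβ using hdecomp
    have hψ2 : ∀ i j, ψ i j = C (α i j) * lf u + C (β i j) * lf w := by
      intro i j
      rw [hrepr' i j, hαβ i j, lf_smul_add]
    -- the 3×3 coefficient matrix of the minors in the basis lfu², lfu·lfw, lfw²
    set M : Matrix (Fin 3) (Fin 3) k := Matrix.of fun i =>
      ![α (i+1) 0 * α (i+2) 1 - α (i+1) 1 * α (i+2) 0,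
        α (i+1) 0 * β (i+2) 1 + β (i+1) 0 * α (i+2) 1
          - α (i+1) 1 * β (i+2) 0 - β (i+1) 1 * α (i+2) 0,
        β (i+1) 0 * β (i+2) 1 - β (i+1) 1 * β (i+2) 0] with hM
    have hminorexp : ∀ i, minor i =
        C (M i 0) * lf u ^ 2 + C (M i 1) * (lf u * lf w) + C (M i 2) * lf w ^ 2 := by
      intro i
      rw [hminor]
      simp only [hψ2, hM, Matrix.of_apply, Matrix.cons_val_zero, Matrix.cons_val_one,
        Matrix.head_cons, Matrix.cons_val_two, Matrix.tail_cons, _root_.map_sub, _root_.map_add, _root_.map_mul]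
      ring
    have hcomb : ∀ c : Fin 3 → k, (∑ i, C (c i) * minor i)
        = C ((c ᵥ* M) 0) * lf u ^ 2 + C ((c ᵥ* M) 1) * (lf u * lf w)
          + C ((c ᵥ* M) 2) * lf w ^ 2 := by
      intro c
      simp only [hminorexp, Matrix.vecMul, dotProduct, Fin.sum_univ_three,
        _root_.map_add, _root_.map_mul]
      ring
    have hinj : Function.Injective M.vecMulLinear := by
      have hz : ∀ c : Fin 3 → k, M.vecMulLinear c = 0 → c = 0 := by
        intro c hc
        apply hindep
        rw [hcomb c]
        have h0 : c ᵥ* M = 0 := by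
          rw [← Matrix.vecMulLinear_apply, hc]
        rw [h0]
        simp
      intro x y hxy
      have : M.vecMulLinear (x - y) = 0 := by rw [map_sub, hxy, sub_self]
      have := hz _ this
      exact sub_eq_zero.mp this
    have hsurj : Function.Surjective M.vecMulLinear :=
      LinearMap.surjective_of_injective hinj
    obtain ⟨c, hc⟩ := hsurj (Pi.single 0 1)
    have hcM : c ᵥ* M = Pi.single 0 1 := by
      rw [← Matrix.vecMulLinear_apply, hc]
    have hcne : c ≠ 0 := by
      rintro rfl
      rw [map_zero] at hc
      have := congrFun hc 0
      simp [Pi.single_eq_same] at this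
    refine hrank1 c hcne ⟨lf u, lf_hom u, ?_⟩
    rw [hcomb c, hcM]
    simp [Pi.single_apply, sq]
  exact rank_one_aux N hN0 hcross
end

section
/- The set X ⊂ P^4 over an algebraically closed field k (char k ≠ 5) defined by the condition that the 3×5 matrix with rows (x_0^2, x_1^2, x_2^2, x_3^2, x_4^2), (x_1x_4, x_0x_2, x_1x_3, x_2x_4, x_0x_3), (x_2x_3, x_3x_4, x_0x_4, x_0x_1, x_1x_2) has rank ≤ 1, when evaluated at any of its points, yields a column vector proportional to one of the six points (1:0:0) or (1:ζ^i:ζ^{-i}) (i = 0,...,4) of P^2, where ζ is a primitive 5th root of unity; and these six points are exactly the points (ξ:η:ν) ∈ P^2 at which the 3×4 matrix with rows (ξ, η, ν, 0), (ν, ξ, 0, -η), (0, 0, η, ν) has rank ≤ 2. -/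
open Matrix

/-- The 3×5 matrix of quadratic monomials defining the syzygetic locus of the
Hesse pencil of genus one curves of degree 5. -/
def syzMatrix {k : Type*} [Field k] (x : Fin 5 → k) : Matrix (Fin 3) (Fin 5) k :=
  !![x 0 ^ 2, x 1 ^ 2, x 2 ^ 2, x 3 ^ 2, x 4 ^ 2;
     x 1 * x 4, x 0 * x 2, x 1 * x 3, x 2 * x 4, x 0 * x 3;
     x 2 * x 3, x 3 * x 4, x 0 * x 4, x 0 * x 1, x 1 * x 2]

/-- The 3×4 matrix whose rank ≤ 2 locus in `P²` consists of six points. -/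
def sixPtMatrix {k : Type*} [Field k] (ξ η ν : k) : Matrix (Fin 3) (Fin 4) k :=
  !![ξ, η, ν, 0;
     ν, ξ, 0, -η;
     0, 0, η, ν]

/-- `p ∈ P²` is one of the six points `(1:0:0)` or `(1:ζ^i:ζ^{-i})`. -/
def IsSixPoint {k : Type*} [Field k] (ζ : k) (p : Fin 3 → k) : Prop :=
  ∃ c : k, c ≠ 0 ∧
    (p = c • ![1, 0, 0] ∨
      ∃ i : Fin 5, p = c • ![1, ζ ^ (i : ℕ), ζ ^ (5 - (i : ℕ))])

lemma rank_submatrix_le'' {k : Type*} [Field k] {m n m' n' : Type*} [Fintype m] [Fintype n]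
    [Fintype m'] [Fintype n'] [DecidableEq m] [DecidableEq n]
    (A : Matrix m n k) (f : m' → m) (g : n' → n) : (A.submatrix f g).rank ≤ A.rank := by
  have h : A.submatrix f g =
      (Matrix.of fun i r => if r = f i then (1:k) else 0) * A *
        (Matrix.of fun c j => if c = g j then (1:k) else 0) := by
    ext i j
    simp [Matrix.mul_apply, Finset.sum_ite_eq, Finset.sum_ite_eq']
  rw [h]
  exact le_trans (Matrix.rank_mul_le_left _ _) (Matrix.rank_mul_le_right _ _)

lemma le_rank_of_det_ne {k : Type*} [Field k] {m n : Type*} [Fintype m] [Fintype n]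
    [DecidableEq m] [DecidableEq n] {p : ℕ}
    (A : Matrix m n k) (f : Fin p → m) (g : Fin p → n)
    (h : (A.submatrix f g).det ≠ 0) : p ≤ A.rank := by
  have h1 := rank_submatrix_le'' A f g
  have h2 : (A.submatrix f g).rank = p := by
    have := Matrix.rank_of_isUnit (A.submatrix f g)
      ((Matrix.isUnit_iff_isUnit_det _).mpr h.isUnit)
    simpa using this
  omega

lemma rank_le_two_of_vecMul {k : Type*} [Field k] (A : Matrix (Fin 3) (Fin 4) k)
    (v : Fin 3 → k) (hv : v ≠ 0) (h : Matrix.vecMul v A = 0) : A.rank ≤ 2 := by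
  rw [← Matrix.rank_transpose]
  have h3 := LinearMap.finrank_range_add_finrank_ker (Aᵀ.mulVecLin)
  have hd : Module.finrank k (Fin 3 → k) = 3 := by simp
  rw [hd] at h3
  have hker : 0 < Module.finrank k (LinearMap.ker Aᵀ.mulVecLin) := by
    have hv' : v ∈ LinearMap.ker Aᵀ.mulVecLin := by
      simp [LinearMap.mem_ker, Matrix.mulVecLin_apply, Matrix.mulVec_transpose, h]
    have : Nontrivial (LinearMap.ker Aᵀ.mulVecLin) := ⟨⟨v, hv'⟩, 0, by simpa using hv⟩
    exact Module.finrank_pos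
  have : Aᵀ.rank = Module.finrank k (LinearMap.range Aᵀ.mulVecLin) := rfl
  omega

lemma sixpoint_of_cubics {k : Type*} [Field k] {ζ : k} (hζ : IsPrimitiveRoot ζ 5)
    {ξ η ν : k} (h0 : ¬(ξ = 0 ∧ η = 0 ∧ ν = 0))
    (e1 : η * (ξ ^ 2 - η * ν) = 0) (e2 : ν * (ξ ^ 2 - η * ν) = 0)
    (e3 : ξ * η ^ 2 - ν ^ 3 = 0) (e4 : η ^ 3 - ξ * ν ^ 2 = 0) :
    IsSixPoint ζ ![ξ, η, ν] := by
  have hz5 : ζ ^ 5 = 1 := hζ.pow_eq_one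
  by_cases hη : η = 0
  · subst hη
    have hν : ν = 0 := by
      have : ν ^ 3 = 0 := by linear_combination -e3
      exact pow_eq_zero_iff (by norm_num) |>.mp this
    subst hν
    have hξ : ξ ≠ 0 := by tauto
    refine ⟨ξ, hξ, Or.inl ?_⟩
    funext i; fin_cases i <;> simp
  · have hν : ν ≠ 0 := by
      intro h; subst h
      exact hη (pow_eq_zero_iff (n := 3) (by norm_num) |>.mp (by linear_combination e4))
    have hξ : ξ ≠ 0 := by
      intro h; subst h
      exact hη (pow_eq_zero_iff (n := 3) (by norm_num) |>.mp (by linear_combination e4))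
    have h5 : (η / ν) ^ 5 = 1 := by
      rw [div_pow, div_eq_one_iff_eq (pow_ne_zero _ hν)]
      linear_combination η ^ 2 * e4 + ν ^ 2 * e3
    obtain ⟨j, hj5, hje⟩ := hζ.eq_pow_of_pow_eq_one h5
    have hην : η = ζ ^ j * ν := by
      field_simp at hje; exact hje.symm
    have hνξ : ν = ξ * (ζ ^ j) ^ 2 := by
      have key : (ξ * (ζ ^ j) ^ 2 - ν) * ν ^ 2 = 0 := by
        linear_combination e3 - ξ * (ζ ^ j * ν + η) * hην
      rcases mul_eq_zero.mp key with h | h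
      · exact (sub_eq_zero.mp h).symm
      · exact absurd (pow_eq_zero_iff (by norm_num) |>.mp h) hν
    have hηξ : η = ξ * (ζ ^ j) ^ 3 := by rw [hην, hνξ]; ring
    clear hην hje h5 e1 e2 e3 e4 hη hν h0
    interval_cases j
    · refine ⟨ξ, hξ, Or.inr ⟨0, ?_⟩⟩
      funext t; fin_cases t
      · simp
      · norm_num; linear_combination hηξ
      · norm_num; linear_combination hνξ - ξ * hz5
    · refine ⟨ξ, hξ, Or.inr ⟨3, ?_⟩⟩
      funext t; fin_cases t
      · simp
      · norm_num [show ((3:Fin 5):ℕ) = 3 from rfl]; linear_combination hηξ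
      · norm_num [show ((3:Fin 5):ℕ) = 3 from rfl]; linear_combination hνξ
    · refine ⟨ξ, hξ, Or.inr ⟨1, ?_⟩⟩
      funext t; fin_cases t
      · simp
      · norm_num; linear_combination hηξ + ξ * ζ * hz5
      · norm_num; linear_combination hνξ
    · refine ⟨ξ, hξ, Or.inr ⟨4, ?_⟩⟩
      funext t; fin_cases t
      · simp
      · norm_num [show ((4:Fin 5):ℕ) = 4 from rfl]; linear_combination hηξ + ξ * ζ ^ 4 * hz5
      · norm_num [show ((4:Fin 5):ℕ) = 4 from rfl]; linear_combination hνξ + ξ * ζ * hz5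
    · refine ⟨ξ, hξ, Or.inr ⟨2, ?_⟩⟩
      funext t; fin_cases t
      · simp
      · norm_num; linear_combination hηξ + ξ * ζ ^ 2 * (ζ ^ 5 + 1) * hz5
      · norm_num; linear_combination hνξ + ξ * ζ ^ 3 * hz5

/-- At any point of the locus `{rank ≤ 1}` of the 3×5 matrix of quadratic
monomials, every nonzero column is proportional to one of the six points
`(1:0:0)`, `(1:ζ^i:ζ^{-i})` of `P²`; and these six points are exactly the
points `(ξ:η:ν)` where the 3×4 matrix `sixPtMatrix` has rank at most 2. -/
theorem syzygetic_image {k : Type*} [Field k] [IsAlgClosed k]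
    (hchar : (5 : k) ≠ 0) (ζ : k) (hζ : IsPrimitiveRoot ζ 5) :
    (∀ x : Fin 5 → k, x ≠ 0 → (syzMatrix x).rank ≤ 1 →
      ∀ j : Fin 5, (∀ i, syzMatrix x i j = 0) ∨
        IsSixPoint ζ (fun i => syzMatrix x i j)) ∧
    (∀ ξ η ν : k, ¬(ξ = 0 ∧ η = 0 ∧ ν = 0) →
      ((sixPtMatrix ξ η ν).rank ≤ 2 ↔ IsSixPoint ζ ![ξ, η, ν])) := by
  have hz5 : ζ ^ 5 = 1 := hζ.pow_eq_one
  constructor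
  · intro x hx hrank j
    have hm : ∀ (r1 r2 : Fin 3) (c1 c2 : Fin 5),
        syzMatrix x r1 c1 * syzMatrix x r2 c2 - syzMatrix x r1 c2 * syzMatrix x r2 c1 = 0 := by
      intro r1 r2 c1 c2
      by_contra hne
      have hdet : ((syzMatrix x).submatrix ![r1, r2] ![c1, c2]).det ≠ 0 := by
        rw [Matrix.det_fin_two]
        simpa using hne
      have := le_rank_of_det_ne _ _ _ hdet
      omega
    by_cases hcol : ∀ i, syzMatrix x i j = 0
    · exact Or.inl hcol
    · refine Or.inr ?_
      fin_cases j
      · -- column 0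
        have hcv : (fun i => syzMatrix x i 0) = ![x 0 ^ 2, x 1 * x 4, x 2 * x 3] := by
          funext t; fin_cases t <;> simp [syzMatrix]
        show IsSixPoint ζ fun i => syzMatrix x i 0
        rw [hcv]
        have m0124 := hm 0 1 2 4
        have m0202 := hm 0 2 0 2
        have m0101 := hm 0 1 0 1
        have m0103 := hm 0 1 0 3
        have m0112 := hm 0 1 1 2
        have m0104 := hm 0 1 0 4
        have m0212 := hm 0 2 1 2
        have m0102 := hm 0 1 0 2
        have m0113 := hm 0 1 1 3
        simp [syzMatrix] at m0124 m0202 m0101 m0103 m0112 m0104 m0212 m0102 m0113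
        refine sixpoint_of_cubics hζ ?_ ?_ ?_ ?_ ?_
        · rintro ⟨h1, h2, h3⟩
          exact hcol (by intro t; fin_cases t <;> first | exact h1 | exact h2 | exact h3)
        · linear_combination x 1 * x 2 * m0124 + x 0 * x 1 * m0202
        · linear_combination x 0 * x 3 * m0101 + x 2 ^ 2 * m0103 + x 0 * x 4 * m0112
        · linear_combination - x 3 * x 4 * m0104 + x 4 ^ 2 * m0124 + x 3 ^ 2 * m0202 + x 0 * x 4 * m0212
        · linear_combination x 0 * x 1 * m0102 - x 1 ^ 2 * m0104 + x 0 * x 2 * m0113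
      · -- column 1
        have hcv : (fun i => syzMatrix x i 1) = ![x 1 ^ 2, x 0 * x 2, x 3 * x 4] := by
          funext t; fin_cases t <;> simp [syzMatrix]
        show IsSixPoint ζ fun i => syzMatrix x i 1
        rw [hcv]
        have m0130 := hm 0 1 3 0
        have m0213 := hm 0 2 1 3
        have m0112 := hm 0 1 1 2
        have m0114 := hm 0 1 1 4
        have m0123 := hm 0 1 2 3
        have m0110 := hm 0 1 1 0
        have m0223 := hm 0 2 2 3
        have m0113 := hm 0 1 1 3
        have m0124 := hm 0 1 2 4
        simp [syzMatrix] at m0130 m0213 m0112 m0114 m0123 m0110 m0223 m0113 m0124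
        refine sixpoint_of_cubics hζ ?_ ?_ ?_ ?_ ?_
        · rintro ⟨h1, h2, h3⟩
          exact hcol (by intro t; fin_cases t <;> first | exact h1 | exact h2 | exact h3)
        · linear_combination x 2 * x 3 * m0130 + x 1 * x 2 * m0213
        · linear_combination x 1 * x 4 * m0112 + x 3 ^ 2 * m0114 + x 1 * x 0 * m0123
        · linear_combination - x 4 * x 0 * m0110 + x 0 ^ 2 * m0130 + x 4 ^ 2 * m0213 + x 1 * x 0 * m0223
        · linear_combination x 1 * x 2 * m0113 - x 2 ^ 2 * m0110 + x 1 * x 3 * m0124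
      · -- column 2
        have hcv : (fun i => syzMatrix x i 2) = ![x 2 ^ 2, x 1 * x 3, x 0 * x 4] := by
          funext t; fin_cases t <;> simp [syzMatrix]
        show IsSixPoint ζ fun i => syzMatrix x i 2
        rw [hcv]
        have m0141 := hm 0 1 4 1
        have m0224 := hm 0 2 2 4
        have m0123 := hm 0 1 2 3
        have m0120 := hm 0 1 2 0
        have m0134 := hm 0 1 3 4
        have m0121 := hm 0 1 2 1
        have m0234 := hm 0 2 3 4
        have m0124 := hm 0 1 2 4
        have m0130 := hm 0 1 3 0
        simp [syzMatrix] at m0141 m0224 m0123 m0120 m0134 m0121 m0234 m0124 m0130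
        refine sixpoint_of_cubics hζ ?_ ?_ ?_ ?_ ?_
        · rintro ⟨h1, h2, h3⟩
          exact hcol (by intro t; fin_cases t <;> first | exact h1 | exact h2 | exact h3)
        · linear_combination x 3 * x 4 * m0141 + x 2 * x 3 * m0224
        · linear_combination x 2 * x 0 * m0123 + x 4 ^ 2 * m0120 + x 2 * x 1 * m0134
        · linear_combination - x 0 * x 1 * m0121 + x 1 ^ 2 * m0141 + x 0 ^ 2 * m0224 + x 2 * x 1 * m0234
        · linear_combination x 2 * x 3 * m0124 - x 3 ^ 2 * m0121 + x 2 * x 4 * m0130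
      · -- column 3
        have hcv : (fun i => syzMatrix x i 3) = ![x 3 ^ 2, x 2 * x 4, x 0 * x 1] := by
          funext t; fin_cases t <;> simp [syzMatrix]
        show IsSixPoint ζ fun i => syzMatrix x i 3
        rw [hcv]
        have m0102 := hm 0 1 0 2
        have m0230 := hm 0 2 3 0
        have m0134 := hm 0 1 3 4
        have m0131 := hm 0 1 3 1
        have m0140 := hm 0 1 4 0
        have m0132 := hm 0 1 3 2
        have m0240 := hm 0 2 4 0
        have m0130 := hm 0 1 3 0
        have m0141 := hm 0 1 4 1
        simp [syzMatrix] at m0102 m0230 m0134 m0131 m0140 m0132 m0240 m0130 m0141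
        refine sixpoint_of_cubics hζ ?_ ?_ ?_ ?_ ?_
        · rintro ⟨h1, h2, h3⟩
          exact hcol (by intro t; fin_cases t <;> first | exact h1 | exact h2 | exact h3)
        · linear_combination x 4 * x 0 * m0102 + x 3 * x 4 * m0230
        · linear_combination x 3 * x 1 * m0134 + x 0 ^ 2 * m0131 + x 3 * x 2 * m0140
        · linear_combination - x 1 * x 2 * m0132 + x 2 ^ 2 * m0102 + x 1 ^ 2 * m0230 + x 3 * x 2 * m0240
        · linear_combination x 3 * x 4 * m0130 - x 4 ^ 2 * m0132 + x 3 * x 0 * m0141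
      · -- column 4
        have hcv : (fun i => syzMatrix x i 4) = ![x 4 ^ 2, x 0 * x 3, x 1 * x 2] := by
          funext t; fin_cases t <;> simp [syzMatrix]
        show IsSixPoint ζ fun i => syzMatrix x i 4
        rw [hcv]
        have m0113 := hm 0 1 1 3
        have m0241 := hm 0 2 4 1
        have m0140 := hm 0 1 4 0
        have m0142 := hm 0 1 4 2
        have m0101 := hm 0 1 0 1
        have m0143 := hm 0 1 4 3
        have m0201 := hm 0 2 0 1
        have m0141 := hm 0 1 4 1
        have m0102 := hm 0 1 0 2
        simp [syzMatrix] at m0113 m0241 m0140 m0142 m0101 m0143 m0201 m0141 m0102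
        refine sixpoint_of_cubics hζ ?_ ?_ ?_ ?_ ?_
        · rintro ⟨h1, h2, h3⟩
          exact hcol (by intro t; fin_cases t <;> first | exact h1 | exact h2 | exact h3)
        · linear_combination x 0 * x 1 * m0113 + x 4 * x 0 * m0241
        · linear_combination x 4 * x 2 * m0140 + x 1 ^ 2 * m0142 + x 4 * x 3 * m0101
        · linear_combination - x 2 * x 3 * m0143 + x 3 ^ 2 * m0113 + x 2 ^ 2 * m0241 + x 4 * x 3 * m0201
        · linear_combination x 4 * x 0 * m0141 - x 0 ^ 2 * m0143 + x 4 * x 1 * m0102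
    
  · intro ξ η ν h0
    constructor
    · intro hrank
      have d1 : η * (ξ ^ 2 - η * ν) = 0 := by
        have hdet : ((sixPtMatrix ξ η ν).submatrix id ![0, 1, 2]).det = η * (ξ ^ 2 - η * ν) := by
          rw [Matrix.det_fin_three]; simp [sixPtMatrix]; ring
        by_contra hne
        rw [← hdet] at hne
        have := le_rank_of_det_ne _ _ _ hne
        omega
      have d2 : ν * (ξ ^ 2 - η * ν) = 0 := by
        have hdet : ((sixPtMatrix ξ η ν).submatrix id ![0, 1, 3]).det = ν * (ξ ^ 2 - η * ν) := by
          rw [Matrix.det_fin_three]; simp [sixPtMatrix]; ring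
        by_contra hne
        rw [← hdet] at hne
        have := le_rank_of_det_ne _ _ _ hne
        omega
      have d3 : ξ * η ^ 2 - ν ^ 3 = 0 := by
        have hdet : ((sixPtMatrix ξ η ν).submatrix id ![0, 2, 3]).det = ξ * η ^ 2 - ν ^ 3 := by
          rw [Matrix.det_fin_three]; simp [sixPtMatrix]; ring
        by_contra hne
        rw [← hdet] at hne
        have := le_rank_of_det_ne _ _ _ hne
        omega
      have d4 : η ^ 3 - ξ * ν ^ 2 = 0 := by
        have hdet : ((sixPtMatrix ξ η ν).submatrix id ![1, 2, 3]).det = η ^ 3 - ξ * ν ^ 2 := by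
          rw [Matrix.det_fin_three]; simp [sixPtMatrix]; ring
        by_contra hne
        rw [← hdet] at hne
        have := le_rank_of_det_ne _ _ _ hne
        omega
      exact sixpoint_of_cubics hζ h0 d1 d2 d3 d4
    · rintro ⟨c, hc, hp | ⟨i, hp⟩⟩
      · have hξ : ξ = c := by simpa using congr_fun hp 0
        have hη : η = 0 := by simpa using congr_fun hp 1
        have hν : ν = 0 := by simpa using congr_fun hp 2
        refine rank_le_two_of_vecMul _ ![0, 0, 1] ?_ ?_
        · intro h; simpa using congr_fun h 2
        · subst hη hν
          funext j; fin_cases j <;>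
            simp [Matrix.vecMul, dotProduct, sixPtMatrix, Fin.sum_univ_succ]
      · have hξ : ξ = c := by simpa using congr_fun hp 0
        have hη : η = c * ζ ^ (i : ℕ) := by simpa using congr_fun hp 1
        have hν : ν = c * ζ ^ (5 - (i : ℕ)) := by simpa using congr_fun hp 2
        refine rank_le_two_of_vecMul _ ![ξ ^ 2, -(ξ * η), -(ν ^ 2)] ?_ ?_
        · intro h
          have := congr_fun h 0
          simp [hξ] at this
          exact hc this
        · have key1 : ζ ^ (i : ℕ) * ζ ^ (5 - (i : ℕ)) = 1 := by
            rw [← pow_add, Nat.add_sub_cancel' i.isLt.le]; exact hz5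
          have key2 : (ζ ^ (5 - (i : ℕ))) ^ 5 = 1 := by
            rw [← pow_mul, mul_comm, pow_mul, hz5, one_pow]
          subst hξ hη hν
          funext j; fin_cases j <;>
            simp [Matrix.vecMul, dotProduct, sixPtMatrix, Fin.sum_univ_succ]
          · linear_combination (-(ξ ^ 3)) * key1
          · ring
          · linear_combination (-(ξ ^ 3 * ζ ^ (5 - (i : ℕ)))) * key1
          · linear_combination (-(ξ ^ 3 * (ζ ^ ((i : ℕ))) ^ 2)) * key2 +
              (ξ ^ 3 * (ζ ^ (5 - (i : ℕ))) ^ 3 * (ζ ^ (i : ℕ) * ζ ^ (5 - (i : ℕ)) + 1)) * key1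
end
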